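/- In a stable instance, a good solution has few non-pure clusters: let n := |D| ≥ 3, ε ∈ (0, 1/150], and k ≥ 2 with k ≤ |F|, and suppose the instance is (ε/ln n)-stable, i.e., opt_{k−1} ≥ (1 + ε/ln n)·opt_k. Let OPT ⊆ F with |OPT| = k and cost(OPT) = opt_k, let S ⊆ F with |S| = k and cost(S) ≤ 5·opt_k, and fix assignments σ_OPT for OPT and σ_S for S. For o ∈ OPT write C*_o := σ_OPT⁻¹(o) and for c ∈ S write C'_c := σ_S⁻¹(c); the cluster C*_o is called pure (with respect to S) if there exists c ∈ S with |C'_c Δ C*_o| ≤ 3ε·min(|C*_o|, |C'_c|). Then the number of centers o ∈ OPT whose cluster C*_o is not pure is at most (ln n)/ε³. -/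

import Mathlib

open Finset

/-- `d(p,S)`: distance from `p` to the closest point of `S` (junk `0` if `S = ∅`). -/
noncomputable def dS {X : Type*} [MetricSpace X] (p : X) (S : Finset X) : ℝ :=
  if h : S.Nonempty then S.inf' h (fun c => dist p c) else 0

/-- `cost(S) = Σ_{p∈D} d(p,S)`. -/
noncomputable def kmCost {X : Type*} [MetricSpace X] (D S : Finset X) : ℝ :=
  ∑ p ∈ D, dS p S

/-- `opt_k = min{cost(T) : T ⊆ F, |T| = k}`. -/
noncomputable def kmOpt {X : Type*} [MetricSpace X] (D F : Finset X) (k : ℕ) : ℝ :=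
  sInf {c : ℝ | ∃ T : Finset X, T ⊆ F ∧ T.card = k ∧ kmCost D T = c}

/-- The cluster of center `o` under assignment `σ`. -/
def cluster {X : Type*} [DecidableEq X] (D : Finset X) (σ : X → X) (o : X) : Finset X :=
  D.filter (fun p => σ p = o)

/-- The cluster of `o ∈ OPT` is pure (w.r.t. `S`) if some cluster of `S` agrees with it
up to `3ε·min` of the cluster sizes. -/
def IsPure {X : Type*} [DecidableEq X] (D S : Finset X) (σS σO : X → X) (ε : ℝ)
    (o : X) : Prop :=
  ∃ c ∈ S, ((symmDiff (cluster D σS c) (cluster D σO o)).card : ℝ)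
    ≤ 3 * ε * min ((cluster D σO o).card : ℝ) ((cluster D σS c).card : ℝ)

lemma dS_nonneg {X : Type*} [MetricSpace X] (p : X) (S : Finset X) : 0 ≤ dS p S := by
  unfold dS
  split
  · exact Finset.le_inf' _ _ (fun c _ => dist_nonneg)
  · exact le_refl 0

lemma dS_le {X : Type*} [MetricSpace X] (p c : X) (S : Finset X) (hc : c ∈ S) :
    dS p S ≤ dist p c := by
  unfold dS
  rw [dif_pos ⟨c, hc⟩]
  exact Finset.inf'_le _ hc

lemma exists_dS {X : Type*} [MetricSpace X] (p : X) (S : Finset X) (h : S.Nonempty) :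
    ∃ c ∈ S, dS p S = dist p c := by
  unfold dS
  rw [dif_pos h]
  exact Finset.exists_mem_eq_inf' h _

lemma kmCost_nonneg {X : Type*} [MetricSpace X] (D S : Finset X) : 0 ≤ kmCost D S :=
  Finset.sum_nonneg (fun p _ => dS_nonneg p S)

lemma kmOpt_le {X : Type*} [MetricSpace X] (D F T : Finset X) (k : ℕ)
    (hT : T ⊆ F) (hcard : T.card = k) : kmOpt D F k ≤ kmCost D T := by
  apply csInf_le
  · exact ⟨0, fun x ⟨T', _, _, hx⟩ => hx ▸ kmCost_nonneg D T'⟩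
  · exact ⟨T, hT, hcard, rfl⟩

set_option maxHeartbeats 2000000 in
open scoped Classical in
theorem stable_few_nonpure_clusters {X : Type*} [MetricSpace X] [DecidableEq X]
    (D F : Finset X) (hD3 : 3 ≤ D.card) (hF : F.Nonempty)
    (ε : ℝ) (hε0 : 0 < ε) (hε1 : ε ≤ 1 / 150)
    (k : ℕ) (hk2 : 2 ≤ k) (hkF : k ≤ F.card)
    (hstable : (1 + ε / Real.log D.card) * kmOpt D F k ≤ kmOpt D F (k - 1))
    (OPT : Finset X) (hOPTF : OPT ⊆ F) (hOPTcard : OPT.card = k)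
    (hOPTopt : kmCost D OPT = kmOpt D F k)
    (S : Finset X) (hSF : S ⊆ F) (hScard : S.card = k)
    (hS5 : kmCost D S ≤ 5 * kmOpt D F k)
    (σO σS : X → X)
    (hσO : ∀ p ∈ D, σO p ∈ OPT ∧ dist p (σO p) = dS p OPT)
    (hσS : ∀ p ∈ D, σS p ∈ S ∧ dist p (σS p) = dS p S) :
    ((OPT.filter (fun o => ¬ IsPure D S σS σO ε o)).card : ℝ)
      ≤ Real.log D.card / ε ^ 3 := by
  classical
  have hn3 : (3:ℝ) ≤ (D.card : ℝ) := by exact_mod_cast hD3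
  have hL1 : 1 < Real.log D.card := by
    have h3 : Real.exp 1 < 3 := lt_of_lt_of_le Real.exp_one_lt_d9 (by norm_num)
    have h4 : 1 < Real.log 3 := (Real.lt_log_iff_exp_lt (by norm_num)).2 h3
    have h5 : Real.log 3 ≤ Real.log D.card := Real.log_le_log (by norm_num) hn3
    linarith
  have hL0 : 0 < Real.log D.card := by linarith
  set L : ℝ := Real.log D.card with hLdef
  set δ : ℝ := ε / L with hδdef
  have hδ0 : 0 < δ := div_pos hε0 hL0
  set opt : ℝ := kmCost D OPT with hoptdef
  have hopt0 : 0 ≤ opt := kmCost_nonneg D OPT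
  -- degenerate case : opt = 0
  by_cases hzero : opt = 0
  · have hSz : ∀ p ∈ D, dS p S = 0 := by
      have hcS : kmCost D S = 0 := by
        have h1 : kmCost D S ≤ 5 * opt := by rw [hOPTopt]; exact hS5
        have h2 : 0 ≤ kmCost D S := kmCost_nonneg D S
        rw [hzero] at h1; linarith
      intro p hp
      have := (Finset.sum_eq_zero_iff_of_nonneg (fun q _ => dS_nonneg q S)).mp hcS
      exact this p hp
    have hOz : ∀ p ∈ D, dS p OPT = 0 := by
      intro p hp
      have hcO : kmCost D OPT = 0 := by rw [← hoptdef]; exact hzero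
      exact (Finset.sum_eq_zero_iff_of_nonneg (fun q _ => dS_nonneg q OPT)).mp hcO p hp
    have hfixO : ∀ p ∈ D, σO p = p := by
      intro p hp
      have : dist p (σO p) = 0 := ((hσO p hp).2).trans (hOz p hp)
      exact (dist_eq_zero.mp this).symm
    have hfixS : ∀ p ∈ D, σS p = p := by
      intro p hp
      have : dist p (σS p) = 0 := ((hσS p hp).2).trans (hSz p hp)
      exact (dist_eq_zero.mp this).symm
    have hclO : ∀ o : X, cluster D σO o = if o ∈ D then {o} else ∅ := by
      intro o
      rw [cluster, Finset.filter_congr (fun p hp => by rw [hfixO p hp]), Finset.filter_eq']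
    have hclS : ∀ c : X, cluster D σS c = if c ∈ D then {c} else ∅ := by
      intro c
      rw [cluster, Finset.filter_congr (fun p hp => by rw [hfixS p hp]), Finset.filter_eq']
    have hpure : ∀ o ∈ OPT, IsPure D S σS σO ε o := by
      intro o ho
      by_cases hoD : o ∈ D
      · have hoS : o ∈ S := by
          have := (hσS o hoD).1
          rwa [hfixS o hoD] at this
        refine ⟨o, hoS, ?_⟩
        rw [hclO, hclS, if_pos hoD]
        simp [symmDiff_self]
        positivity
      · by_cases hSD : ∃ c ∈ S, c ∉ D
        · obtain ⟨c, hcS, hcD⟩ := hSD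
          refine ⟨c, hcS, ?_⟩
          rw [hclO, hclS, if_neg hoD, if_neg hcD]
          simp
        · push_neg at hSD
          exfalso
          have hDS : D ⊆ S := fun p hp => by
            have := (hσS p hp).1; rwa [hfixS p hp] at this
          have hDOPT : D ⊆ OPT := fun p hp => by
            have := (hσO p hp).1; rwa [hfixO p hp] at this
          have hSD' : S ⊆ D := fun c hc => hSD c hc
          have hSeq : S = D := Finset.Subset.antisymm hSD' hDS
          have hcards : OPT.card ≤ D.card := by
            rw [hOPTcard, ← hScard, hSeq]
          have : D = OPT := Finset.eq_of_subset_of_card_le hDOPT hcards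
          exact hoD (this ▸ ho)
    have hempty : OPT.filter (fun o => ¬ IsPure D S σS σO ε o) = ∅ := by
      rw [Finset.filter_eq_empty_iff]
      intro o ho
      simp only [not_not]
      exact hpure o ho
    rw [hempty]
    simp only [Finset.card_empty, Nat.cast_zero]
    positivity
  have hopt : 0 < opt := lt_of_le_of_ne hopt0 (Ne.symm hzero)
  -- notation
  set A : X → Finset X := fun o => cluster D σO o with hAdef
  set Cc : X → Finset X := fun c => cluster D σS c with hCcdef
  set w : X → ℝ := fun p => dist p (σS p) + dist p (σO p) with hwdef
  have hw0 : ∀ p, 0 ≤ w p := fun p => by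
    have := dist_nonneg (x := p) (y := σS p)
    have := dist_nonneg (x := p) (y := σO p)
    simp only [hwdef]; linarith
  have hsumw : ∑ p ∈ D, w p ≤ 6 * opt := by
    have he : ∑ p ∈ D, w p = kmCost D S + kmCost D OPT := by
      rw [kmCost, kmCost, ← Finset.sum_add_distrib]
      exact Finset.sum_congr rfl (fun p hp => by
        simp only [hwdef]; rw [(hσS p hp).2, (hσO p hp).2])
    have h5 : kmCost D S ≤ 5 * opt := by rw [hOPTopt]; exact hS5
    rw [he, ← hoptdef]
    linarith
  set Dd : X → ℝ := fun o => dS o (OPT.erase o) with hDddef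
  have hDd0 : ∀ o, 0 ≤ Dd o := fun o => dS_nonneg _ _
  set Near : X → Finset X := fun o => S.filter (fun c => dist c o < Dd o / 2) with hNdef
  -- F1 : removal cost
  have hF1 : ∀ o ∈ OPT, δ * opt ≤ ((A o).card : ℝ) * Dd o := by
    intro o ho
    have herne : (OPT.erase o).Nonempty := by
      rw [← Finset.card_pos, Finset.card_erase_of_mem ho, hOPTcard]; omega
    obtain ⟨t, htmem, htd⟩ := exists_dS o _ herne
    have htd' : Dd o = dist o t := htd
    have hkm1 : (1 + δ) * opt ≤ kmCost D (OPT.erase o) := by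
      calc (1 + δ) * opt = (1 + δ) * kmOpt D F k := by rw [hOPTopt]
        _ ≤ kmOpt D F (k-1) := hstable
        _ ≤ kmCost D (OPT.erase o) := kmOpt_le D F _ _
            (Finset.Subset.trans (Finset.erase_subset o OPT) hOPTF)
            (by rw [Finset.card_erase_of_mem ho, hOPTcard])
    have h2 : kmCost D (OPT.erase o) ≤ opt + ((A o).card : ℝ) * Dd o := by
      have hb : ∀ p ∈ D, dS p (OPT.erase o)
          ≤ dist p (σO p) + (if σO p = o then Dd o else 0) := by
        intro p hp
        by_cases hpo : σO p = o
        · rw [if_pos hpo]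
          calc dS p (OPT.erase o) ≤ dist p t := dS_le p t _ htmem
            _ ≤ dist p o + dist o t := dist_triangle p o t
            _ = dist p (σO p) + Dd o := by rw [hpo, htd']
        · rw [if_neg hpo, add_zero]
          exact dS_le p (σO p) _ (Finset.mem_erase.mpr ⟨hpo, (hσO p hp).1⟩)
      calc kmCost D (OPT.erase o)
          ≤ ∑ p ∈ D, (dist p (σO p) + (if σO p = o then Dd o else 0)) :=
            Finset.sum_le_sum hb
        _ = (∑ p ∈ D, dist p (σO p)) + ∑ p ∈ D, (if σO p = o then Dd o else 0) :=
            Finset.sum_add_distrib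
        _ = opt + ((A o).card : ℝ) * Dd o := by
            congr 1
            · rw [hoptdef, kmCost]
              exact Finset.sum_congr rfl (fun p hp => (hσO p hp).2)
            · rw [← Finset.sum_filter, Finset.sum_const, nsmul_eq_mul]
              simp only [hAdef, cluster]
    linarith
  -- far clients pay
  have hfar : ∀ o ∈ OPT, ∀ p ∈ A o, σS p ∉ Near o → Dd o / 2 ≤ w p := by
    intro o ho p hp hnot
    have hpD : p ∈ D := (Finset.mem_filter.mp hp).1
    have hpo : σO p = o := (Finset.mem_filter.mp hp).2
    have hcS : σS p ∈ S := (hσS p hpD).1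
    have hge : Dd o / 2 ≤ dist (σS p) o := by
      by_contra hlt
      push_neg at hlt
      exact hnot (Finset.mem_filter.mpr ⟨hcS, hlt⟩)
    have htr : dist (σS p) o ≤ dist (σS p) p + dist p o := dist_triangle _ _ _
    rw [dist_comm (σS p) p] at htr
    have hpo2 : dist p o = dist p (σO p) := by rw [hpo]
    simp only [hwdef]
    linarith
  -- outsiders of near centers pay
  have hout : ∀ o ∈ OPT, ∀ c ∈ Near o, ∀ q ∈ Cc c \ A o, Dd o / 2 ≤ w q := by
    intro o ho c hc q hq
    have hcmem := Finset.mem_filter.mp hc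
    obtain ⟨hqC, hqA⟩ := Finset.mem_sdiff.mp hq
    have hqD : q ∈ D := (Finset.mem_filter.mp hqC).1
    have hqc : σS q = c := (Finset.mem_filter.mp hqC).2
    have hqo : σO q ≠ o := fun h => hqA (Finset.mem_filter.mpr ⟨hqD, h⟩)
    have hmem : σO q ∈ OPT.erase o := Finset.mem_erase.mpr ⟨hqo, (hσO q hqD).1⟩
    have h1 : Dd o ≤ dist o (σO q) := dS_le o _ _ hmem
    have h2 : dist o (σO q) ≤ dist o c + dist c (σO q) := dist_triangle _ _ _
    have h3 : dist c (σO q) ≤ dist c q + dist q (σO q) := dist_triangle _ _ _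
    have h4 : dist c o < Dd o / 2 := hcmem.2
    have h5 : dist o c = dist c o := dist_comm o c
    have h6 : dist c q = dist q c := dist_comm c q
    have h7 : dist q (σS q) = dist q c := by rw [hqc]
    simp only [hwdef]
    linarith
  -- near families are disjoint
  have hNdisj : ∀ o ∈ OPT, ∀ o' ∈ OPT, o ≠ o' → Disjoint (Near o) (Near o') := by
    intro o ho o' ho' hne
    rw [Finset.disjoint_left]
    intro c hc hc'
    have h1 : dist c o < Dd o / 2 := (Finset.mem_filter.mp hc).2
    have h2 : dist c o' < Dd o' / 2 := (Finset.mem_filter.mp hc').2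
    have h3 : Dd o ≤ dist o o' := dS_le o o' _ (Finset.mem_erase.mpr ⟨hne.symm, ho'⟩)
    have h4 : Dd o' ≤ dist o' o := dS_le o' o _ (Finset.mem_erase.mpr ⟨hne, ho⟩)
    have h5 : dist o o' ≤ dist o c + dist c o' := dist_triangle _ _ _
    have h6 : dist o c = dist c o := dist_comm o c
    have h7 : dist o' o = dist o o' := dist_comm o' o
    linarith
  -- clusters are disjoint
  have hAdisj : ∀ o o' : X, o ≠ o' → Disjoint (A o) (A o') := by
    intro o o' hne
    rw [Finset.disjoint_left]
    intro p hp hp'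
    exact hne (((Finset.mem_filter.mp hp).2.symm).trans (Finset.mem_filter.mp hp').2)
  set NP : Finset X := OPT.filter (fun o => ¬ IsPure D S σS σO ε o) with hNPdef
  set G : Finset X := NP.filter (fun o => (Near o).card ≤ 1) with hGdef
  set Zs : Finset X := OPT.filter (fun o => Near o = ∅) with hZdef
  set Bs : Finset X := OPT.filter (fun o => 2 ≤ (Near o).card) with hBdef
  set T : X → ℝ := fun o => (∑ p ∈ (A o).filter (fun p => σS p ∉ Near o), w p)
      + ∑ c ∈ Near o, ∑ q ∈ Cc c \ A o, w q with hTdef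
  have hGOPT : ∀ o ∈ G, o ∈ OPT := by
    intro o hoG
    exact (Finset.mem_filter.mp ((Finset.mem_filter.mp hoG).1)).1
  -- key per-cluster bound on G
  have hG : ∀ o ∈ G, ε * (δ * opt) ≤ T o := by
    intro o hoG
    have hoNP : o ∈ NP := (Finset.mem_filter.mp hoG).1
    have hNle : (Near o).card ≤ 1 := (Finset.mem_filter.mp hoG).2
    have hoOPT : o ∈ OPT := (Finset.mem_filter.mp hoNP).1
    have hnp : ¬ IsPure D S σS σO ε o := (Finset.mem_filter.mp hoNP).2
    have hT1 : ((((A o).filter (fun p => σS p ∉ Near o)).card : ℝ)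
        + ∑ c ∈ Near o, ((Cc c \ A o).card : ℝ)) * (Dd o / 2) ≤ T o := by
      have hA1 : ((((A o).filter (fun p => σS p ∉ Near o)).card : ℝ)) * (Dd o / 2)
          ≤ ∑ p ∈ (A o).filter (fun p => σS p ∉ Near o), w p := by
        have := Finset.card_nsmul_le_sum ((A o).filter (fun p => σS p ∉ Near o)) w (Dd o / 2)
          (fun p hp => hfar o hoOPT p (Finset.mem_of_mem_filter p hp) (Finset.mem_filter.mp hp).2)
        simpa [nsmul_eq_mul] using this
      have hA2 : (∑ c ∈ Near o, ((Cc c \ A o).card : ℝ)) * (Dd o / 2)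
          ≤ ∑ c ∈ Near o, ∑ q ∈ Cc c \ A o, w q := by
        rw [Finset.sum_mul]
        apply Finset.sum_le_sum
        intro c hc
        have := Finset.card_nsmul_le_sum (Cc c \ A o) w (Dd o / 2)
          (fun q hq => hout o hoOPT c hc q hq)
        simpa [nsmul_eq_mul] using this
      simp only [hTdef]
      rw [add_mul]
      exact add_le_add hA1 hA2
    -- step 2 : 2 ε |A o| ≤ f + g
    have hT2 : 2 * ε * ((A o).card : ℝ)
        ≤ (((A o).filter (fun p => σS p ∉ Near o)).card : ℝ)
          + ∑ c ∈ Near o, ((Cc c \ A o).card : ℝ) := by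
      rcases Finset.eq_empty_or_nonempty (Near o) with hNe | hNn
      · have hfa : (A o).filter (fun p => σS p ∉ Near o) = A o := by
          apply Finset.filter_true_of_mem
          intro p _
          rw [hNe]
          exact Finset.notMem_empty _
        rw [hfa, hNe]
        simp only [Finset.sum_empty, add_zero]
        have ha0 : (0:ℝ) ≤ ((A o).card : ℝ) := Nat.cast_nonneg _
        nlinarith
      · have hc1 : (Near o).card = 1 := le_antisymm hNle (Finset.card_pos.mpr hNn)
        obtain ⟨c, hcEq⟩ := Finset.card_eq_one.mp hc1
        have hcS : c ∈ S := by
          have hcN : c ∈ Near o := by rw [hcEq]; exact Finset.mem_singleton_self c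
          exact (Finset.mem_filter.mp hcN).1
        have hf_eq : (A o).filter (fun p => σS p ∉ Near o) = A o \ Cc c := by
          ext p
          simp only [Finset.mem_filter, Finset.mem_sdiff, hcEq, Finset.mem_singleton]
          constructor
          · rintro ⟨hpA, hns⟩
            exact ⟨hpA, fun hpC => hns (Finset.mem_filter.mp hpC).2⟩
          · rintro ⟨hpA, hnC⟩
            exact ⟨hpA, fun hsc => hnC (Finset.mem_filter.mpr ⟨(Finset.mem_filter.mp hpA).1, hsc⟩)⟩
        rw [hf_eq, hcEq, Finset.sum_singleton]
        -- nonpurity at c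
        have hnsym : 3 * ε * min (((A o).card : ℝ)) (((Cc c).card : ℝ))
            < ((symmDiff (Cc c) (A o)).card : ℝ) := by
          by_contra hle
          push_neg at hle
          exact hnp ⟨c, hcS, hle⟩
        have hΔ : (symmDiff (Cc c) (A o)).card = (Cc c \ A o).card + (A o \ Cc c).card := by
          rw [symmDiff_def]
          exact Finset.card_union_of_disjoint disjoint_sdiff_sdiff
        have hi1 : (A o \ Cc c).card + (A o ∩ Cc c).card = (A o).card :=
          Finset.card_sdiff_add_card_inter (A o) (Cc c)
        have hi2 : (A o ∩ Cc c).card ≤ (Cc c).card :=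
          Finset.card_le_card Finset.inter_subset_right
        have hi3 : (A o ∩ Cc c).card ≤ (A o).card :=
          Finset.card_le_card Finset.inter_subset_left
        have hmin : ((A o ∩ Cc c).card : ℝ) ≤ min (((A o).card : ℝ)) (((Cc c).card : ℝ)) :=
          le_min (by exact_mod_cast hi3) (by exact_mod_cast hi2)
        by_contra hcon
        push_neg at hcon
        have hΔ' : ((symmDiff (Cc c) (A o)).card : ℝ)
            = ((Cc c \ A o).card : ℝ) + ((A o \ Cc c).card : ℝ) := by
          rw [hΔ]; push_cast; ring
        have hi1' : ((A o \ Cc c).card : ℝ) + ((A o ∩ Cc c).card : ℝ) = ((A o).card : ℝ) := by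
          exact_mod_cast hi1
        have hf0 : (0:ℝ) ≤ ((A o \ Cc c).card : ℝ) := Nat.cast_nonneg _
        have hg0 : (0:ℝ) ≤ ((Cc c \ A o).card : ℝ) := Nat.cast_nonneg _
        have hm0 : (0:ℝ) ≤ ((A o ∩ Cc c).card : ℝ) := Nat.cast_nonneg _
        nlinarith [hnsym, hcon, hmin, hΔ', hi1', hf0, hg0, hm0, hε0, hε1]
    calc ε * (δ * opt) ≤ ε * (((A o).card : ℝ) * Dd o) := by
          have := hF1 o hoOPT
          exact mul_le_mul_of_nonneg_left this (le_of_lt hε0)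
      _ = (2 * ε * ((A o).card : ℝ)) * (Dd o / 2) := by ring
      _ ≤ ((((A o).filter (fun p => σS p ∉ Near o)).card : ℝ)
          + ∑ c ∈ Near o, ((Cc c \ A o).card : ℝ)) * (Dd o / 2) := by
          apply mul_le_mul_of_nonneg_right hT2
          have := hDd0 o
          linarith
      _ ≤ T o := hT1
  -- global bound on sum of T
  have hGsum : ∑ o ∈ G, T o ≤ 12 * opt := by
    have hpart1 : ∑ o ∈ G, (∑ p ∈ (A o).filter (fun p => σS p ∉ Near o), w p)
        ≤ ∑ p ∈ D, w p := by
      have hd : (↑G : Set X).PairwiseDisjoint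
          (fun o => (A o).filter (fun p => σS p ∉ Near o)) := fun o _ o' _ hne =>
        Disjoint.mono (Finset.filter_subset _ _) (Finset.filter_subset _ _) (hAdisj o o' hne)
      rw [← Finset.sum_biUnion hd]
      apply Finset.sum_le_sum_of_subset_of_nonneg
      · intro p hp
        obtain ⟨o, hoG, hpo⟩ := Finset.mem_biUnion.mp hp
        exact (Finset.mem_filter.mp (Finset.mem_of_mem_filter p hpo)).1
      · exact fun p _ _ => hw0 p
    have hpart2 : ∑ o ∈ G, (∑ c ∈ Near o, ∑ q ∈ Cc c \ A o, w q) ≤ ∑ p ∈ D, w p := by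
      have step1 : ∑ o ∈ G, (∑ c ∈ Near o, ∑ q ∈ Cc c \ A o, w q)
          ≤ ∑ o ∈ G, ∑ c ∈ Near o, (∑ q ∈ Cc c, w q) := by
        apply Finset.sum_le_sum
        intro o _
        apply Finset.sum_le_sum
        intro c _
        exact Finset.sum_le_sum_of_subset_of_nonneg Finset.sdiff_subset (fun q _ _ => hw0 q)
      have step2 : ∑ o ∈ G, ∑ c ∈ Near o, (∑ q ∈ Cc c, w q)
          = ∑ c ∈ G.biUnion Near, (∑ q ∈ Cc c, w q) :=
        (Finset.sum_biUnion (fun o hoG o' hoG' hne =>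
          hNdisj o (hGOPT o hoG) o' (hGOPT o' hoG') hne) :
          ∑ c ∈ G.biUnion Near, _ = _).symm
      have step3 : ∑ c ∈ G.biUnion Near, (∑ q ∈ Cc c, w q) ≤ ∑ c ∈ S, (∑ q ∈ Cc c, w q) := by
        apply Finset.sum_le_sum_of_subset_of_nonneg
        · intro c hc
          obtain ⟨o, _, hco⟩ := Finset.mem_biUnion.mp hc
          exact (Finset.mem_filter.mp hco).1
        · exact fun c _ _ => Finset.sum_nonneg (fun q _ => hw0 q)
      have step4 : ∑ c ∈ S, (∑ q ∈ Cc c, w q) = ∑ p ∈ D, w p := by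
        simp only [hCcdef, cluster]
        exact Finset.sum_fiberwise_of_maps_to (fun p hp => (hσS p hp).1) w
      linarith
    have : ∑ o ∈ G, T o = (∑ o ∈ G, (∑ p ∈ (A o).filter (fun p => σS p ∉ Near o), w p))
        + ∑ o ∈ G, (∑ c ∈ Near o, ∑ q ∈ Cc c \ A o, w q) := by
      simp only [hTdef]
      rw [Finset.sum_add_distrib]
    linarith
  -- bound on |G|
  have hGcard : (G.card : ℝ) ≤ 12 / (ε * δ) := by
    have h1 : (G.card : ℝ) * (ε * (δ * opt)) ≤ ∑ o ∈ G, T o := by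
      have := Finset.card_nsmul_le_sum G T (ε * (δ * opt)) hG
      simpa [nsmul_eq_mul] using this
    have h2 : (G.card : ℝ) * (ε * (δ * opt)) ≤ 12 * opt := le_trans h1 hGsum
    rw [le_div_iff₀ (by positivity)]
    have h3 : ((G.card : ℝ) * (ε * δ)) * opt ≤ 12 * opt := by linarith [h2]
    have := (mul_le_mul_iff_of_pos_right hopt).mp h3
    linarith
  -- bound on |Zs|
  have hZcard : (Zs.card : ℝ) ≤ 12 / δ := by
    have hZ : ∀ o ∈ Zs, δ * opt / 2 ≤ ∑ p ∈ A o, w p := by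
      intro o hoZ
      have hoOPT : o ∈ OPT := (Finset.mem_filter.mp hoZ).1
      have hNe : Near o = ∅ := (Finset.mem_filter.mp hoZ).2
      have h1 : ((A o).card : ℝ) * (Dd o / 2) ≤ ∑ p ∈ A o, w p := by
        have := Finset.card_nsmul_le_sum (A o) w (Dd o / 2)
          (fun p hp => hfar o hoOPT p hp (by rw [hNe]; exact Finset.notMem_empty _))
        simpa [nsmul_eq_mul] using this
      have h2 := hF1 o hoOPT
      linarith
    have hsum : ∑ o ∈ Zs, (∑ p ∈ A o, w p) ≤ ∑ p ∈ D, w p := by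
      have hd : (↑Zs : Set X).PairwiseDisjoint A := fun o _ o' _ hne => hAdisj o o' hne
      rw [← Finset.sum_biUnion hd]
      apply Finset.sum_le_sum_of_subset_of_nonneg
      · intro p hp
        obtain ⟨o, _, hpo⟩ := Finset.mem_biUnion.mp hp
        exact (Finset.mem_filter.mp hpo).1
      · exact fun p _ _ => hw0 p
    have h3 : (Zs.card : ℝ) * (δ * opt / 2) ≤ 6 * opt := by
      have h4 := Finset.card_nsmul_le_sum Zs (fun o => ∑ p ∈ A o, w p) (δ * opt / 2) hZ
      rw [nsmul_eq_mul] at h4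
      linarith
    rw [le_div_iff₀ hδ0]
    have h5 : ((Zs.card : ℝ) * δ) * opt ≤ 12 * opt := by linarith
    have := (mul_le_mul_iff_of_pos_right hopt).mp h5
    linarith
  -- pigeonhole : |Bs| ≤ |Zs|
  have hBcard : Bs.card ≤ Zs.card := by
    have hpt : ∀ o ∈ OPT,
        ((if Near o = ∅ then 0 else 1) + (if 2 ≤ (Near o).card then 1 else 0) : ℕ)
          ≤ (Near o).card := by
      intro o _
      by_cases h1 : Near o = ∅
      · simp [h1]
      · have hge1 : 1 ≤ (Near o).card :=
          Finset.card_pos.mpr (Finset.nonempty_of_ne_empty h1)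
        by_cases h2 : 2 ≤ (Near o).card
        · simp only [if_neg h1, if_pos h2]; omega
        · simp only [if_neg h1, if_neg h2]; omega
    have hsum1 : ∑ o ∈ OPT, ((if Near o = ∅ then 0 else 1)
        + (if 2 ≤ (Near o).card then 1 else 0) : ℕ) ≤ ∑ o ∈ OPT, (Near o).card :=
      Finset.sum_le_sum hpt
    have hcount : ∑ o ∈ OPT, (Near o).card ≤ k := by
      rw [← Finset.card_biUnion (fun o ho o' ho' hne => hNdisj o ho o' ho' hne)]
      calc (OPT.biUnion Near).card ≤ S.card := Finset.card_le_card (by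
          intro c hc
          obtain ⟨o, _, hco⟩ := Finset.mem_biUnion.mp hc
          exact (Finset.mem_filter.mp hco).1)
        _ = k := hScard
    have hsplit1 : ∑ o ∈ OPT, ((if Near o = ∅ then 0 else 1) : ℕ)
        = (OPT.filter (fun o => ¬ Near o = ∅)).card := by
      rw [Finset.card_filter]
      apply Finset.sum_congr rfl
      intro o _
      by_cases h : Near o = ∅ <;> simp [h]
    have hsplit2 : ∑ o ∈ OPT, ((if 2 ≤ (Near o).card then 1 else 0) : ℕ) = Bs.card := by
      rw [hBdef, Finset.card_filter]
    have hcompl : (OPT.filter (fun o => ¬ Near o = ∅)).card + Zs.card = OPT.card := by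
      rw [hZdef]
      rw [add_comm]
      exact Finset.card_filter_add_card_filter_not (p := fun o => Near o = ∅)
    rw [Finset.sum_add_distrib, hsplit1, hsplit2] at hsum1
    have := hOPTcard
    omega
  -- combine
  have hsplit : NP.card ≤ G.card + Bs.card := by
    have hsub : NP ⊆ G ∪ Bs := by
      intro o hoNP
      by_cases h : (Near o).card ≤ 1
      · exact Finset.mem_union_left _ (Finset.mem_filter.mpr ⟨hoNP, h⟩)
      · refine Finset.mem_union_right _ (Finset.mem_filter.mpr
          ⟨(Finset.mem_filter.mp hoNP).1, by omega⟩)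
    exact le_trans (Finset.card_le_card hsub) (Finset.card_union_le _ _)
  have hfinal : (NP.card : ℝ) ≤ 12 / (ε * δ) + 12 / δ := by
    have hb : (Bs.card : ℝ) ≤ 12 / δ := le_trans (by exact_mod_cast hBcard) hZcard
    have hh : (NP.card : ℝ) ≤ (G.card : ℝ) + (Bs.card : ℝ) := by exact_mod_cast hsplit
    linarith
  have harith : 12 / (ε * δ) + 12 / δ ≤ L / ε ^ 3 := by
    rw [hδdef]
    have hL0' : (0:ℝ) < L := hL0
    have h1 : 12 / (ε * (ε / L)) = 12 * L / ε ^ 2 := by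
      field_simp
    have h2 : 12 / (ε / L) = 12 * L / ε := by
      field_simp
    rw [h1, h2]
    have key : 12 * ε + 12 * ε ^ 2 ≤ 1 := by nlinarith
    have he : 12 * L / ε ^ 2 + 12 * L / ε = (12 * ε + 12 * ε ^ 2) * (L / ε ^ 3) := by
      field_simp
    rw [he]
    have hLpos : 0 < L / ε ^ 3 := by positivity
    nlinarith [hLpos, key]
  exact le_trans hfinal harith
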